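/- There exists a constant C > 0 (depending on m and ν) such that for all x, y ∈ ℝ^d with x ≠ y, setting z = x - y, one has ∫_{|v|≤m} |z + v - R(x,y)v|^2 · ((q(v) ∧ q(v+z)𝟙_{|v+z|≤m})/q(v)) ν(dv) ≤ C(1 + |z|^2). -/

import Mathlib

open MeasureTheory
open scoped ENNReal RealInnerProductSpace

/-- The reflection operator `R(x,y)v = v - 2⟨e,v⟩e` where `e = (x-y)/‖x-y‖`. -/
noncomputable def reflectOp {d : ℕ} (x y v : EuclideanSpace ℝ (Fin d)) :
    EuclideanSpace ℝ (Fin d) :=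
  v - (2 * ⟪‖x - y‖⁻¹ • (x - y), v⟫) • (‖x - y‖⁻¹ • (x - y))

private lemma ennreal_div_mul_le (c a : ℝ≥0∞) : c / a * a ≤ c := by
  calc c / a * a = c * (a⁻¹ * a) := by rw [div_eq_mul_inv, mul_assoc]
  _ ≤ c * 1 := mul_le_mul_right (ENNReal.inv_mul_le_one a) c
  _ = c := mul_one c

/-- Linear growth bound: there is `C > 0` such that for all `x ≠ y`, with `z = x - y`,
`∫_{|v|≤m} |z + v - R(x,y)v|² ρ(v,z) ν(dv) ≤ C(1 + |z|²)`, where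
`ρ(v,z) = (q(v) ∧ q(v+z)𝟙_{|v+z|≤m})/q(v)` (set to `1` where `q(v)=0`). -/
theorem linear_growth {d : ℕ} (m : ℝ) (hm : 0 < m)
    (q : EuclideanSpace ℝ (Fin d) → ℝ≥0∞) (hq : Measurable q)
    (ν : Measure (EuclideanSpace ℝ (Fin d)))
    (hν : ν = MeasureTheory.volume.withDensity q)
    (hbig : ν {v | m < ‖v‖} < ⊤)
    (hsmall : ∫⁻ v in {v | ‖v‖ ≤ m}, ENNReal.ofReal (‖v‖ ^ 2) ∂ν < ⊤) :
    ∃ C : ℝ≥0∞, 0 < C ∧ C < ⊤ ∧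
      ∀ x y : EuclideanSpace ℝ (Fin d), x ≠ y →
        ∫⁻ v in {v | ‖v‖ ≤ m},
            ENNReal.ofReal (‖(x - y) + v - reflectOp x y v‖ ^ 2) *
              (if q v = 0 then 1 else
                min (q v) (if ‖v + (x - y)‖ ≤ m then q (v + (x - y)) else 0) / q v) ∂ν
          ≤ C * (1 + ENNReal.ofReal (‖x - y‖ ^ 2)) := by
  classical
  set S : Set (EuclideanSpace ℝ (Fin d)) := {v | ‖v‖ ≤ m} with hSdef
  have hSmeas : MeasurableSet S := measurableSet_le measurable_norm measurable_const
  set K := ∫⁻ v in S, ENNReal.ofReal (‖v‖ ^ 2) ∂ν with hKdef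
  have hKlt : K < ⊤ := hsmall
  refine ⟨4 * K + 1, lt_of_lt_of_le zero_lt_one le_add_self, ?_, ?_⟩
  · exact ENNReal.add_lt_top.mpr ⟨ENNReal.mul_lt_top (by simp) hKlt, ENNReal.one_lt_top⟩
  intro x y hxy
  set z := x - y with hzdef
  have hz : z ≠ 0 := sub_ne_zero.mpr hxy
  have hznorm : ‖z‖ ≠ 0 := norm_ne_zero_iff.mpr hz
  set e : EuclideanSpace ℝ (Fin d) := ‖z‖⁻¹ • z with hedef
  have he : ‖e‖ = 1 := by
    rw [hedef, norm_smul, norm_inv, norm_norm, inv_mul_cancel₀ hznorm]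
  -- the density-ratio factor
  set ρ : EuclideanSpace ℝ (Fin d) → ℝ≥0∞ := fun v =>
    if q v = 0 then 1 else
      min (q v) (if ‖v + z‖ ≤ m then q (v + z) else 0) / q v with hρdef
  have hρmeas : Measurable ρ := by
    apply Measurable.ite (hq (measurableSet_singleton 0)) measurable_const
    apply Measurable.div _ hq
    apply Measurable.min hq
    exact Measurable.ite (measurableSet_le (measurable_norm.comp (measurable_add_const z))
      measurable_const) (hq.comp (measurable_add_const z)) measurable_const
  have hρ_le_one : ∀ v, ρ v ≤ 1 := by
    intro v
    by_cases h : q v = 0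
    · simp [hρdef, h]
    · simp only [hρdef, h, if_false]
      exact ENNReal.div_le_of_le_mul (by simp)
  have hρq : ∀ v, ρ v * q v ≤ (if ‖v + z‖ ≤ m then q (v + z) else 0) := by
    intro v
    by_cases h : q v = 0
    · simp [hρdef, h]
    · simp only [hρdef, h, if_false]
      exact le_trans (ennreal_div_mul_le _ _) (min_le_right _ _)
  -- pointwise norm bound
  have hnorm : ∀ v : EuclideanSpace ℝ (Fin d),
      ENNReal.ofReal (‖z + v - reflectOp x y v‖ ^ 2)
        ≤ 2 * ENNReal.ofReal (‖v + z‖ ^ 2) + 2 * ENNReal.ofReal (‖v‖ ^ 2) := by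
    intro v
    have hze : (‖z‖ : ℝ) • e = z := by
      rw [hedef, smul_smul, mul_inv_cancel₀ hznorm, one_smul]
    have h1 : z + v - reflectOp x y v = (‖z‖ + 2 * ⟪e, v⟫) • e := by
      simp only [reflectOp, ← hzdef, ← hedef]
      rw [add_smul, hze]
      abel
    have hinner_z : ⟪e, z⟫ = ‖z‖ := by
      rw [hedef, real_inner_smul_left, real_inner_self_eq_norm_sq, sq]
      field_simp
    have h2 : ‖z + v - reflectOp x y v‖ ≤ ‖v + z‖ + ‖v‖ := by
      rw [h1, norm_smul, he, mul_one, Real.norm_eq_abs]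
      have : ‖z‖ + 2 * ⟪e, v⟫ = ⟪e, v + z⟫ + ⟪e, v⟫ := by
        rw [inner_add_right, hinner_z]; ring
      rw [this]
      calc |⟪e, v + z⟫ + ⟪e, v⟫| ≤ |⟪e, v + z⟫| + |⟪e, v⟫| := abs_add_le _ _
      _ ≤ ‖e‖ * ‖v + z‖ + ‖e‖ * ‖v‖ :=
          add_le_add (abs_real_inner_le_norm e (v + z)) (abs_real_inner_le_norm e v)
      _ = ‖v + z‖ + ‖v‖ := by rw [he, one_mul, one_mul]
    have h3 : ‖z + v - reflectOp x y v‖ ^ 2 ≤ 2 * ‖v + z‖ ^ 2 + 2 * ‖v‖ ^ 2 := by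
      nlinarith [norm_nonneg (z + v - reflectOp x y v), norm_nonneg (v + z), norm_nonneg v,
        sq_nonneg (‖v + z‖ - ‖v‖), mul_self_le_mul_self (norm_nonneg (z + v - reflectOp x y v)) h2]
    calc ENNReal.ofReal (‖z + v - reflectOp x y v‖ ^ 2)
        ≤ ENNReal.ofReal (2 * ‖v + z‖ ^ 2 + 2 * ‖v‖ ^ 2) := ENNReal.ofReal_le_ofReal h3
      _ = 2 * ENNReal.ofReal (‖v + z‖ ^ 2) + 2 * ENNReal.ofReal (‖v‖ ^ 2) := by
          rw [ENNReal.ofReal_add (by positivity) (by positivity),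
            ENNReal.ofReal_mul (by norm_num), ENNReal.ofReal_mul (by norm_num)]
          norm_num
  -- the main term bound
  have hA_meas : Measurable fun v : EuclideanSpace ℝ (Fin d) =>
      (2 : ℝ≥0∞) * ENNReal.ofReal (‖v + z‖ ^ 2) := by
    apply Measurable.const_mul
    exact ENNReal.measurable_ofReal.comp
      ((measurable_norm.comp (measurable_add_const z)).pow_const 2)
  have hT : ∫⁻ v in S, 2 * ENNReal.ofReal (‖v + z‖ ^ 2) * ρ v ∂ν ≤ 2 * K := by
    have hmeas : Measurable fun v => 2 * ENNReal.ofReal (‖v + z‖ ^ 2) * ρ v :=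
      hA_meas.mul hρmeas
    rw [hν, restrict_withDensity hSmeas, lintegral_withDensity_eq_lintegral_mul _ hq hmeas]
    set F : EuclideanSpace ℝ (Fin d) → ℝ≥0∞ := fun w =>
      S.indicator (fun w => q w * (2 * ENNReal.ofReal (‖w‖ ^ 2))) w with hFdef
    have hpt : ∀ v, (q * fun v => 2 * ENNReal.ofReal (‖v + z‖ ^ 2) * ρ v) v ≤ F (v + z) := by
      intro v
      simp only [Pi.mul_apply, hFdef]
      have : q v * (2 * ENNReal.ofReal (‖v + z‖ ^ 2) * ρ v)
          = 2 * ENNReal.ofReal (‖v + z‖ ^ 2) * (ρ v * q v) := by ring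
      rw [this]
      by_cases h : ‖v + z‖ ≤ m
      · rw [Set.indicator_of_mem (by simpa [hSdef] using h)]
        calc 2 * ENNReal.ofReal (‖v + z‖ ^ 2) * (ρ v * q v)
            ≤ 2 * ENNReal.ofReal (‖v + z‖ ^ 2) * q (v + z) := by
              refine mul_le_mul_right ?_ _
              simpa [h] using hρq v
          _ = q (v + z) * (2 * ENNReal.ofReal (‖v + z‖ ^ 2)) := by ring
      · rw [Set.indicator_of_notMem (by simpa [hSdef] using h)]
        have : ρ v * q v = 0 := le_antisymm (by simpa [h] using hρq v) zero_le
        simp [this]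
    calc ∫⁻ v in S, (q * fun v => 2 * ENNReal.ofReal (‖v + z‖ ^ 2) * ρ v) v ∂volume
        ≤ ∫⁻ v in S, F (v + z) ∂volume := lintegral_mono fun v => hpt v
      _ ≤ ∫⁻ v, F (v + z) ∂volume := setLIntegral_le_lintegral _ _
      _ = ∫⁻ w, F w ∂volume := lintegral_add_right_eq_self F z
      _ = ∫⁻ w in S, q w * (2 * ENNReal.ofReal (‖w‖ ^ 2)) ∂volume := by
          rw [hFdef, lintegral_indicator hSmeas]
      _ = ∫⁻ w in S, 2 * ENNReal.ofReal (‖w‖ ^ 2) ∂ν := by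
          have hB_meas : Measurable fun w : EuclideanSpace ℝ (Fin d) =>
              (2 : ℝ≥0∞) * ENNReal.ofReal (‖w‖ ^ 2) :=
            (ENNReal.measurable_ofReal.comp (measurable_norm.pow_const 2)).const_mul 2
          rw [hν, restrict_withDensity hSmeas,
            lintegral_withDensity_eq_lintegral_mul _ hq hB_meas]
          rfl
      _ = 2 * K := by
          rw [hKdef, ← lintegral_const_mul' _ _ (by norm_num : (2:ℝ≥0∞) ≠ ⊤)]
  -- pointwise bound on the full integrand
  have hptwise : ∀ v, ENNReal.ofReal (‖z + v - reflectOp x y v‖ ^ 2) * ρ v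
      ≤ 2 * ENNReal.ofReal (‖v + z‖ ^ 2) * ρ v + 2 * ENNReal.ofReal (‖v‖ ^ 2) := by
    intro v
    calc ENNReal.ofReal (‖z + v - reflectOp x y v‖ ^ 2) * ρ v
        ≤ (2 * ENNReal.ofReal (‖v + z‖ ^ 2) + 2 * ENNReal.ofReal (‖v‖ ^ 2)) * ρ v :=
          mul_le_mul_left (hnorm v) _
      _ = 2 * ENNReal.ofReal (‖v + z‖ ^ 2) * ρ v + 2 * ENNReal.ofReal (‖v‖ ^ 2) * ρ v :=
          add_mul _ _ _
      _ ≤ 2 * ENNReal.ofReal (‖v + z‖ ^ 2) * ρ v + 2 * ENNReal.ofReal (‖v‖ ^ 2) * 1 :=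
          add_le_add_right (mul_le_mul_right (hρ_le_one v) _) _
      _ = 2 * ENNReal.ofReal (‖v + z‖ ^ 2) * ρ v + 2 * ENNReal.ofReal (‖v‖ ^ 2) := by
          rw [mul_one]
  have hB_meas : Measurable fun w : EuclideanSpace ℝ (Fin d) =>
      (2 : ℝ≥0∞) * ENNReal.ofReal (‖w‖ ^ 2) :=
    (ENNReal.measurable_ofReal.comp (measurable_norm.pow_const 2)).const_mul 2
  calc ∫⁻ v in S, ENNReal.ofReal (‖z + v - reflectOp x y v‖ ^ 2) *
        (if q v = 0 then 1 else
          min (q v) (if ‖v + z‖ ≤ m then q (v + z) else 0) / q v) ∂ν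
      ≤ ∫⁻ v in S, (2 * ENNReal.ofReal (‖v + z‖ ^ 2) * ρ v
          + 2 * ENNReal.ofReal (‖v‖ ^ 2)) ∂ν := lintegral_mono hptwise
    _ = (∫⁻ v in S, 2 * ENNReal.ofReal (‖v + z‖ ^ 2) * ρ v ∂ν)
          + ∫⁻ v in S, 2 * ENNReal.ofReal (‖v‖ ^ 2) ∂ν :=
        lintegral_add_right _ hB_meas
    _ ≤ 2 * K + 2 * K := by
        refine add_le_add hT ?_
        rw [hKdef, ← lintegral_const_mul' _ _ (by norm_num : (2:ℝ≥0∞) ≠ ⊤)]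
    _ = 4 * K := by ring
    _ ≤ (4 * K + 1) * (1 + ENNReal.ofReal (‖z‖ ^ 2)) := by
        calc (4 : ℝ≥0∞) * K ≤ (4 * K + 1) * 1 := by rw [mul_one]; exact le_self_add
          _ ≤ (4 * K + 1) * (1 + ENNReal.ofReal (‖z‖ ^ 2)) :=
            mul_le_mul_right le_self_add _
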